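/- Let d_n → ∞ be a sequence in (0,∞), and for each n and each x ∈ K let a_n(x) ∈ S^{m−1} be any minimizer of a ↦ Φ_{d_n}(x,a) over the unit sphere S^{m−1}. Then sup over x ∈ K of |d_n(a_n(x) − p̄(x)) − 2q(x)| → 0 as n → ∞, where q(x) = |p(x)|^{−1}(S(x)p̄(x) − (p̄(x)ᵀS(x)p̄(x)) p̄(x)). -/

import Mathlib

set_option maxHeartbeats 4000000


open scoped RealInnerProductSpace

noncomputable section

/-- The matrix `S` applied to a vector of Euclidean space. -/
def mv {m : ℕ} (S : Matrix (Fin m) (Fin m) ℝ) (v : EuclideanSpace ℝ (Fin m)) :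
    EuclideanSpace ℝ (Fin m) := Matrix.toEuclideanLin S v

/-- φ(a,b,c,d;p,S) = −(1/2)(a−b)ᵀS(a−b) − (c+d)((a+b)·p). -/
def phi {m : ℕ} (a b : EuclideanSpace ℝ (Fin m)) (c d : ℝ)
    (p : EuclideanSpace ℝ (Fin m)) (S : Matrix (Fin m) (Fin m) ℝ) : ℝ :=
  -(1 / 2) * ⟪a - b, mv S (a - b)⟫ - (c + d) * ⟪a + b, p⟫


/-- `Φ_d(x,a) = −(1/2)(a+p̄(x))ᵀS(x)(a+p̄(x)) + d(1 − a·p̄(x))|p(x)|`, written here with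
the data `p = p(x)`, `S = S(x)` as arguments. -/
def PhiFn {m : ℕ} (p : EuclideanSpace ℝ (Fin m)) (S : Matrix (Fin m) (Fin m) ℝ)
    (d : ℝ) (a : EuclideanSpace ℝ (Fin m)) : ℝ :=
  -(1 / 2) * ⟪a + ‖p‖⁻¹ • p, mv S (a + ‖p‖⁻¹ • p)⟫ + d * (1 - ⟪a, ‖p‖⁻¹ • p⟫) * ‖p‖

/-- `q(x) = |p(x)|⁻¹ (S(x)p̄(x) − (p̄(x)ᵀS(x)p̄(x)) p̄(x))`. -/
def qq {m : ℕ} (p : EuclideanSpace ℝ (Fin m)) (S : Matrix (Fin m) (Fin m) ℝ) :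
    EuclideanSpace ℝ (Fin m) :=
  ‖p‖⁻¹ • (mv S (‖p‖⁻¹ • p) - ⟪‖p‖⁻¹ • p, mv S (‖p‖⁻¹ • p)⟫ • (‖p‖⁻¹ • p))

variable {m : ℕ}

lemma mv_add (S : Matrix (Fin m) (Fin m) ℝ) (x y : EuclideanSpace ℝ (Fin m)) :
    mv S (x + y) = mv S x + mv S y := by simp [mv, map_add]

lemma mv_zero (S : Matrix (Fin m) (Fin m) ℝ) : mv S 0 = 0 := by simp [mv]

lemma mv_symm {S : Matrix (Fin m) (Fin m) ℝ} (hS : S.IsSymm)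
    (x y : EuclideanSpace ℝ (Fin m)) : ⟪mv S x, y⟫ = ⟪x, mv S y⟫ := by
  have h : S.IsHermitian := by
    rwa [Matrix.IsHermitian, Matrix.conjTranspose_eq_transpose_of_trivial]
  exact (Matrix.isHermitian_iff_isSymmetric.1 h) x y

lemma inner_unit_perturb {u β : EuclideanSpace ℝ (Fin m)} (huu : ⟪u, u⟫ = 1)
    (hb : ‖u + β‖ = 1) : ⟪u, β⟫ = -‖β‖^2/2 := by
  have hnu : ‖u‖^2 = 1 := by rw [← real_inner_self_eq_norm_sq, huu]
  have h := norm_add_sq_real u β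
  rw [hb] at h
  nlinarith [h]

lemma orth_norm {u w : EuclideanSpace ℝ (Fin m)} (hu1 : ‖u‖ = 1) (hw : ⟪w, u⟫ = 0)
    (t : ℝ) : ‖w + t • u‖^2 = ‖w‖^2 + t^2 := by
  have h := norm_add_sq_real w (t • u)
  rw [real_inner_smul_right, hw, norm_smul, hu1, mul_one, Real.norm_eq_abs] at h
  rw [h, sq_abs]
  ring

lemma expand {S : Matrix (Fin m) (Fin m) ℝ} (hS : S.IsSymm)
    {p : EuclideanSpace ℝ (Fin m)} {u : EuclideanSpace ℝ (Fin m)}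
    (hu : ‖p‖⁻¹ • p = u) (hu1 : ⟪u, u⟫ = 1) (d : ℝ)
    (β : EuclideanSpace ℝ (Fin m)) (hb : ‖u + β‖ = 1) :
    PhiFn p S d (u + β) = -2 * ⟪u, mv S u⟫ - 2 * ⟪u, mv S β⟫ - (1/2) * ⟪β, mv S β⟫
      + (d * ‖p‖ / 2) * ‖β‖^2 := by
  have hsym : ⟪β, mv S u⟫ = ⟪u, mv S β⟫ := by
    rw [← mv_symm hS β u, real_inner_comm]
  have hβu : ⟪u, β⟫ = -‖β‖^2/2 := inner_unit_perturb hu1 hb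
  have key : ⟪(u + β) + u, mv S ((u + β) + u)⟫
      = 4*⟪u, mv S u⟫ + 4*⟪u, mv S β⟫ + ⟪β, mv S β⟫ := by
    rw [mv_add, mv_add]
    simp only [inner_add_left, inner_add_right]
    linarith [hsym]
  have hbu : ⟪u + β, u⟫ = 1 + ⟪β, u⟫ := by
    rw [inner_add_left, hu1]
  unfold PhiFn
  rw [hu, key, hbu]
  rw [show (inner ℝ β u : ℝ) = ⟪u, β⟫ from real_inner_comm u β, hβu]
  ring

lemma arith_step1 {D M x Ju Je : ℝ} (hD : 0 < D) (hM : 0 ≤ M) (hx2 : x ≤ 2)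
    (hx0 : 0 ≤ x) (hJu : Ju ≤ M*x) (hJe : Je ≤ M*x^2)
    (h : -2*Ju - (1/2)*Je + (D/2)*x^2 ≤ 0) : D*x ≤ 6*M := by
  rcases eq_or_lt_of_le hx0 with h0 | h0
  · rw [← h0]; simpa using by positivity
  · nlinarith [h, hJu, hJe, h0, mul_le_mul_of_nonneg_left hx2 (mul_nonneg hM hx0)]

lemma arith_s1 {D M s : ℝ} (hD : 0 < D) (h1 : D^2*s ≤ 16*M^2) (h2 : 4*M+1 ≤ D)
    (hM : 0 ≤ M) (hs : 0 ≤ s) : s ≤ 1 := by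
  nlinarith [mul_le_mul h2 h2 (by linarith) (by linarith), mul_nonneg hs hM,
    mul_nonneg (mul_nonneg hs hM) hM]

lemma arith_tabs {s t' : ℝ} (hsq : (t'+1)^2 = 1-s) (h1 : 0 ≤ t'+1) (hs1 : s ≤ 1)
    (hs0 : 0 ≤ s) : |t'| ≤ s := by
  rw [abs_le]
  constructor <;> nlinarith [hsq, h1, hs1, hs0]

lemma key_bound {S : Matrix (Fin m) (Fin m) ℝ} (hS : S.IsSymm)
    {p : EuclideanSpace ℝ (Fin m)} (hp : p ≠ 0)
    {M : ℝ} (hM : ∀ v : EuclideanSpace ℝ (Fin m), ‖mv S v‖ ≤ M * ‖v‖)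
    {d : ℝ} (hd : 0 < d) (hD4 : 4 * M + 1 ≤ d * ‖p‖)
    {a : EuclideanSpace ℝ (Fin m)} (ha : ‖a‖ = 1)
    (hmin : ∀ b : EuclideanSpace ℝ (Fin m), ‖b‖ = 1 → PhiFn p S d a ≤ PhiFn p S d b) :
    ‖p‖ * ‖d • (a - ‖p‖⁻¹ • p) - (2:ℝ) • qq p S‖ ≤
      (Real.sqrt (204*M^3 + 580*M^4) + 18*M^2) / Real.sqrt (d * ‖p‖) := by
  have hpn : (0:ℝ) < ‖p‖ := norm_pos_iff.mpr hp
  set u : EuclideanSpace ℝ (Fin m) := ‖p‖⁻¹ • p with hu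
  clear_value u
  have hu1 : ‖u‖ = 1 := by
    rw [hu, norm_smul, norm_inv, norm_norm]
    field_simp
  have huu : ⟪u, u⟫ = 1 := by
    rw [real_inner_self_eq_norm_sq, hu1]; norm_num
  have hM0 : 0 ≤ M := by
    have h := hM u
    rw [hu1, mul_one] at h
    linarith [norm_nonneg (mv S u)]
  set D := d * ‖p‖ with hDdef
  clear_value D
  have hD0 : 0 < D := hDdef ▸ mul_pos hd hpn
  have hD1 : 1 ≤ D := by linarith
  set c := (⟪u, mv S u⟫ : ℝ) with hc
  clear_value c
  have hcM : |c| ≤ M := by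
    rw [hc]
    calc |(⟪u, mv S u⟫ : ℝ)| ≤ ‖u‖ * ‖mv S u‖ := abs_real_inner_le_norm u (mv S u)
    _ ≤ 1 * (M * 1) := by
        rw [hu1, one_mul]
        have := hM u; rw [hu1, mul_one] at this
        simpa using this
    _ = M := by ring
  set v := mv S u - c • u with hv
  clear_value v
  have hvu : ⟪v, u⟫ = 0 := by
    rw [hv, inner_sub_left, real_inner_smul_left, huu, mv_symm hS u u, ← hc]
    ring
  have hvM : ‖v‖ ≤ 2*M := by
    rw [hv]
    calc ‖mv S u - c • u‖ ≤ ‖mv S u‖ + ‖c • u‖ := norm_sub_le _ _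
    _ ≤ M * 1 + |c| * 1 := by
        rw [norm_smul, hu1, Real.norm_eq_abs]
        have := hM u; rw [hu1] at this
        linarith
    _ ≤ 2*M := by linarith
  set ε := a - u with hε
  clear_value ε
  have hauε : a = u + ε := by rw [hε]; abel
  have hεa : ‖u + ε‖ = 1 := by rw [← hauε]; exact ha
  set F : EuclideanSpace ℝ (Fin m) → ℝ :=
    fun β => -2 * ⟪u, mv S β⟫ - (1/2) * ⟪β, mv S β⟫ + (D/2) * ‖β‖^2 with hF
  clear_value F
  have hminF : ∀ β : EuclideanSpace ℝ (Fin m), ‖u + β‖ = 1 → F ε ≤ F β := by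
    intro β hβ
    have h := hmin (u + β) hβ
    rw [hauε] at h
    rw [expand hS hu.symm huu d ε hεa, expand hS hu.symm huu d β hβ] at h
    simp only [hF]
    rw [← hDdef] at h
    linarith
  -- step 1
  have hε2 : ‖ε‖ ≤ 2 := by
    rw [hε]
    calc ‖a - u‖ ≤ ‖a‖ + ‖u‖ := norm_sub_le _ _
    _ = 2 := by rw [ha, hu1]; norm_num
  have hIuε : |⟪u, mv S ε⟫| ≤ M * ‖ε‖ := by
    calc |⟪u, mv S ε⟫| ≤ ‖u‖ * ‖mv S ε‖ := abs_real_inner_le_norm _ _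
    _ ≤ 1 * (M * ‖ε‖) := by rw [hu1]; exact mul_le_mul_of_nonneg_left (hM ε) zero_le_one
    _ = M * ‖ε‖ := by ring
  have hIεε : |⟪ε, mv S ε⟫| ≤ M * ‖ε‖^2 := by
    calc |⟪ε, mv S ε⟫| ≤ ‖ε‖ * ‖mv S ε‖ := abs_real_inner_le_norm _ _
    _ ≤ ‖ε‖ * (M * ‖ε‖) := mul_le_mul_of_nonneg_left (hM ε) (norm_nonneg ε)
    _ = M * ‖ε‖^2 := by ring
  have hstep1 : D * ‖ε‖ ≤ 6 * M := by
    have h0 : F ε ≤ F 0 := hminF 0 (by simpa using hu1)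
    have h1 : F 0 = 0 := by simp [hF, mv_zero]
    rw [h1] at h0
    simp only [hF] at h0
    exact arith_step1 hD0 hM0 hε2 (norm_nonneg ε) (abs_le.1 hIuε).2 (abs_le.1 hIεε).2
      (by linarith only [h0])
  -- orthogonal decomposition of ε
  set t := (⟪u, ε⟫ : ℝ) with ht
  clear_value t
  set w := ε - t • u with hw
  clear_value w
  have hwu : ⟪w, u⟫ = 0 := by
    rw [hw, inner_sub_left, real_inner_smul_left, huu,
      show (inner ℝ ε u : ℝ) = ⟪u, ε⟫ from real_inner_comm u ε, ← ht]
    ring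
  have hεsplit : ε = w + t • u := by rw [hw]; abel
  have hteq : t = -‖ε‖^2/2 := by rw [ht]; exact inner_unit_perturb huu hεa
  -- competitor
  set w' := (2/D) • v with hw'
  clear_value w'
  have hw'u : ⟪w', u⟫ = 0 := by rw [hw', real_inner_smul_left, hvu]; ring
  set s := ‖w'‖^2 with hs
  clear_value s
  have hs0 : (0:ℝ) ≤ s := by rw [hs]; positivity
  have hw'M : D * ‖w'‖ ≤ 4 * M := by
    rw [hw', norm_smul, Real.norm_eq_abs, abs_of_pos (by positivity : (0:ℝ) < 2/D)]
    rw [show D * (2/D * ‖v‖) = 2 * ‖v‖ by field_simp]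
    linarith
  have hsM : D^2 * s ≤ 16 * M^2 := by
    rw [hs]
    linarith only [mul_le_mul hw'M hw'M (mul_nonneg hD0.le (norm_nonneg w'))
      (by linarith : (0:ℝ) ≤ 4*M)]
  have hs1 : s ≤ 1 := arith_s1 hD0 hsM hD4 hM0 hs0
  set t' := Real.sqrt (1 - s) - 1 with ht'
  clear_value t'
  have hsq : (t' + 1)^2 = 1 - s := by
    rw [ht', sub_add_cancel]
    exact Real.sq_sqrt (by linarith)
  have ht'1 : 0 ≤ t' + 1 := by
    rw [ht', sub_add_cancel]; exact Real.sqrt_nonneg _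
  have ht'abs : |t'| ≤ s := arith_tabs hsq ht'1 hs1 hs0
  set β' := w' + t' • u with hβ'
  clear_value β'
  have hβ'norm2 : ‖β'‖^2 = s + t'^2 := by rw [hβ', orth_norm hu1 hw'u, hs]
  have hβ'unit : ‖u + β'‖ = 1 := by
    have h2 : ‖u + β'‖^2 = 1 := by
      have e : u + β' = w' + (t' + 1) • u := by rw [hβ']; module
      rw [e, orth_norm hu1 hw'u, hsq, ← hs]
      ring
    rw [← Real.sqrt_one, ← h2, Real.sqrt_sq (norm_nonneg _)]
  -- F-identity
  have Fid : ∀ (β w0 : EuclideanSpace ℝ (Fin m)) (t0 : ℝ), ⟪w0, u⟫ = 0 →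
      β = w0 + t0 • u →
      F β = (D/2)*‖w0 - w'‖^2 - (2/D)*‖v‖^2 - 2*c*t0 - (1/2)*⟪β, mv S β⟫
        + (D/2)*t0^2 := by
    intro β w0 t0 hw0 hβeq
    have hu_w0 : (inner ℝ u w0 : ℝ) = 0 := by rw [real_inner_comm]; exact hw0
    have h1 : ⟪u, mv S β⟫ = ⟪v, w0⟫ + c * t0 := by
      rw [← mv_symm hS u β]
      rw [show mv S u = v + c • u by rw [hv]; abel, hβeq]
      simp only [inner_add_left, inner_add_right, real_inner_smul_left,
        real_inner_smul_right, hvu, huu, hu_w0, hw0]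
      ring
    have h2 : ‖β‖^2 = ‖w0‖^2 + t0^2 := by rw [hβeq, orth_norm hu1 hw0]
    have h3 : ‖w0 - w'‖^2 = ‖w0‖^2 - 2*⟪w0, w'⟫ + ‖w'‖^2 := norm_sub_sq_real w0 w'
    have h4 : (⟪w0, w'⟫ : ℝ) = (2/D) * ⟪w0, v⟫ := by rw [hw', real_inner_smul_right]
    have h5 : (⟪v, w0⟫ : ℝ) = ⟪w0, v⟫ := real_inner_comm _ _
    have h6 : ‖w'‖^2 = (2/D)^2 * ‖v‖^2 := by
      rw [hw', norm_smul, Real.norm_eq_abs, abs_of_pos (by positivity : (0:ℝ) < 2/D)]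
      ring
    simp only [hF]
    rw [h1, h2, h3, h4, h5, h6]
    field_simp
    ring
  -- scaled bounds
  have hsq6M : (0:ℝ) ≤ 6*M := by linarith
  have hDε := mul_le_mul hstep1 hstep1 (mul_nonneg hD0.le (norm_nonneg ε)) hsq6M
  have habs_t : D^2 * |t| ≤ 18 * M^2 := by
    have h1 : |t| = ‖ε‖^2/2 := by
      rw [hteq, abs_of_nonpos (by linarith only [sq_nonneg ‖ε‖] : -‖ε‖^2/2 ≤ 0)]
      ring
    rw [h1]
    linarith only [hDε]
  have habs_t' : D^2 * |t'| ≤ 16 * M^2 := by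
    linarith only [mul_le_mul_of_nonneg_left ht'abs (sq_nonneg D), hsM]
  have hε2sq : D^2 * ‖ε‖^2 ≤ 36 * M^2 := by linarith only [hDε]
  have ht'2 : t'^2 ≤ s^2 := by
    have h := mul_le_mul ht'abs ht'abs (abs_nonneg t') hs0
    have h2 := sq_abs t'
    linarith only [h, h2]
  have hβ's : D^2 * ‖β'‖^2 ≤ 32 * M^2 := by
    rw [hβ'norm2]
    have h1 := mul_le_mul_of_nonneg_left ht'2 (sq_nonneg D)
    have h2 := mul_le_mul hsM hs1 hs0 (by positivity : (0:ℝ) ≤ 16*M^2)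
    linarith only [h1, h2, hsM]
  have hIβ'β' : |⟪β', mv S β'⟫| ≤ M * ‖β'‖^2 := by
    calc |⟪β', mv S β'⟫| ≤ ‖β'‖ * ‖mv S β'‖ := abs_real_inner_le_norm _ _
    _ ≤ ‖β'‖ * (M * ‖β'‖) := mul_le_mul_of_nonneg_left (hM β') (norm_nonneg β')
    _ = M * ‖β'‖^2 := by ring
  have u1 : D^2 * (|c| * |t'|) ≤ 16 * M^3 := by
    have h := mul_le_mul hcM habs_t' (by positivity) hM0
    linarith only [h]
  have u2 : D^2 * (|c| * |t|) ≤ 18 * M^3 := by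
    have h := mul_le_mul hcM habs_t (by positivity) hM0
    linarith only [h]
  have u3 : D^2 * |⟪ε, mv S ε⟫| ≤ 36 * M^3 := by
    have h1 := mul_le_mul_of_nonneg_left hIεε (sq_nonneg D)
    have h2 := mul_le_mul_of_nonneg_left hε2sq hM0
    linarith only [h1, h2]
  have u4 : D^2 * |⟪β', mv S β'⟫| ≤ 32 * M^3 := by
    have h1 := mul_le_mul_of_nonneg_left hIβ'β' (sq_nonneg D)
    have h2 := mul_le_mul_of_nonneg_left hβ's hM0
    linarith only [h1, h2]
  have u5 : D^3 * t'^2 ≤ 256 * M^4 := by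
    have h := mul_le_mul hsM hsM (by positivity) (by positivity : (0:ℝ) ≤ 16*M^2)
    have h2 : D^3 * t'^2 ≤ D^3 * s^2 := mul_le_mul_of_nonneg_left ht'2 (by positivity)
    have h3 : D^3 * s^2 ≤ D^4 * s^2 := by
      have hx : (0:ℝ) ≤ D^3 * s^2 := by positivity
      have := mul_le_mul_of_nonneg_left hD1 hx
      linarith only [this]
    linarith only [h, h2, h3]
  -- main comparison
  have hFcomp := hminF β' hβ'unit
  rw [Fid ε w t hwu hεsplit, Fid β' w' t' hw'u hβ'] at hFcomp
  have hzero : ‖w' - w'‖^2 = 0 := by simp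
  set Iε := (⟪ε, mv S ε⟫ : ℝ) with hIεd
  clear_value Iε
  set Iβ := (⟪β', mv S β'⟫ : ℝ) with hIβd
  clear_value Iβ
  have e1 : c * t ≤ |c| * |t| := by rw [← abs_mul]; exact le_abs_self _
  have e2 : -(c * t') ≤ |c| * |t'| := by rw [← abs_mul]; exact neg_le_abs _
  have e3 : Iε ≤ |Iε| := le_abs_self _
  have e4 : -Iβ ≤ |Iβ| := neg_le_abs _
  have hcore : D * ‖w - w'‖^2 ≤ 4 * (|c| * |t|) + 4 * (|c| * |t'|) + |Iε|
      + |Iβ| + D * t'^2 := by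
    rw [hzero] at hFcomp
    linarith only [hFcomp, e1, e2, e3, e4, mul_nonneg hD0.le (sq_nonneg t)]
  have hw2 : D^3 * ‖w - w'‖^2 ≤ 204*M^3 + 580*M^4 := by
    have h := mul_le_mul_of_nonneg_left hcore (sq_nonneg D)
    linarith only [h, u1, u2, u3, u4, u5, sq_nonneg (M^2)]
  -- assemble
  have hqv : qq p S = ‖p‖⁻¹ • v := by
    unfold qq
    rw [← hu, ← hc, ← hv]
  have hd2q : (2:ℝ) • qq p S = d • w' := by
    rw [hqv, hw', smul_smul, smul_smul, hDdef]
    congr 1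
    field_simp
  have hvec : d • ε - (2:ℝ) • qq p S = d • (w - w') + (d*t) • u := by
    rw [hd2q, hεsplit]
    module
  have hnorm : ‖d • ε - (2:ℝ) • qq p S‖ ≤ d * ‖w - w'‖ + d * |t| := by
    rw [hvec]
    calc ‖d • (w - w') + (d*t) • u‖ ≤ ‖d • (w - w')‖ + ‖(d*t) • u‖ := norm_add_le _ _
    _ = d * ‖w - w'‖ + d * |t| := by
        rw [norm_smul, norm_smul, hu1, Real.norm_eq_abs, Real.norm_eq_abs,
          abs_of_pos hd, abs_mul, abs_of_pos hd]
        ring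
  have hC0 : (0:ℝ) ≤ 204*M^3 + 580*M^4 := by positivity
  have hsD : 0 < Real.sqrt D := Real.sqrt_pos.mpr hD0
  have b1 : D * ‖w - w'‖ ≤ Real.sqrt (204*M^3 + 580*M^4) / Real.sqrt D := by
    have h1 : (D * ‖w - w'‖)^2 ≤ (204*M^3 + 580*M^4)/D := by
      rw [le_div_iff₀ hD0]
      linarith only [hw2]
    calc D * ‖w - w'‖ = Real.sqrt ((D * ‖w - w'‖)^2) :=
          (Real.sqrt_sq (by positivity)).symm
    _ ≤ Real.sqrt ((204*M^3 + 580*M^4)/D) := Real.sqrt_le_sqrt h1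
    _ = Real.sqrt (204*M^3 + 580*M^4) / Real.sqrt D := Real.sqrt_div hC0 D
  have hsDle : Real.sqrt D ≤ D := by
    have hx := mul_le_mul_of_nonneg_left hD1 hD0.le
    calc Real.sqrt D ≤ Real.sqrt (D^2) := Real.sqrt_le_sqrt (by linarith only [hx])
    _ = D := Real.sqrt_sq hD0.le
  have b2 : D * |t| ≤ 18*M^2 / Real.sqrt D := by
    have h1 : D * |t| ≤ 18*M^2 / D := by
      rw [le_div_iff₀ hD0]
      linarith only [habs_t]
    have h2 : 18*M^2 / D ≤ 18*M^2 / Real.sqrt D :=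
      div_le_div_of_nonneg_left (by positivity) hsD hsDle
    linarith only [h1, h2]
  calc ‖p‖ * ‖d • ε - (2:ℝ) • qq p S‖ ≤ ‖p‖ * (d * ‖w - w'‖ + d * |t|) :=
        mul_le_mul_of_nonneg_left hnorm hpn.le
  _ = D * ‖w - w'‖ + D * |t| := by rw [hDdef]; ring
  _ ≤ Real.sqrt (204*M^3 + 580*M^4) / Real.sqrt D + 18*M^2 / Real.sqrt D :=
        add_le_add b1 b2
  _ = (Real.sqrt (204*M^3 + 580*M^4) + 18*M^2) / Real.sqrt D := by ring


/-- `sup_{x ∈ K} |d_n(a_n(x) − p̄(x)) − 2q(x)| → 0` as `n → ∞`. -/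
theorem stmt11 {m : ℕ} (hm : 2 ≤ m)
    (K : Set (EuclideanSpace ℝ (Fin m))) (hK : IsCompact K) (hKne : K.Nonempty)
    (p : EuclideanSpace ℝ (Fin m) → EuclideanSpace ℝ (Fin m)) (hpc : ContinuousOn p K)
    (hp0 : ∀ x ∈ K, p x ≠ 0)
    (S : EuclideanSpace ℝ (Fin m) → Matrix (Fin m) (Fin m) ℝ) (hSc : ContinuousOn S K)
    (hSsymm : ∀ x ∈ K, (S x).IsSymm)
    (dseq : ℕ → ℝ) (hdpos : ∀ n, 0 < dseq n)
    (hdtop : Filter.Tendsto dseq Filter.atTop Filter.atTop)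
    (aseq : ℕ → EuclideanSpace ℝ (Fin m) → EuclideanSpace ℝ (Fin m))
    (haunit : ∀ n, ∀ x ∈ K, ‖aseq n x‖ = 1)
    (hamin : ∀ n, ∀ x ∈ K, ∀ a : EuclideanSpace ℝ (Fin m), ‖a‖ = 1 →
      PhiFn (p x) (S x) (dseq n) (aseq n x) ≤ PhiFn (p x) (S x) (dseq n) a)
    :
    TendstoUniformlyOn
      (fun (n : ℕ) (x : EuclideanSpace ℝ (Fin m)) => dseq n • (aseq n x - ‖p x‖⁻¹ • p x))
      (fun x => (2 : ℝ) • qq (p x) (S x)) Filter.atTop K := by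
  classical
  -- operator norm bound
  set L : Matrix (Fin m) (Fin m) ℝ →ₗ[ℝ]
      (EuclideanSpace ℝ (Fin m) →L[ℝ] EuclideanSpace ℝ (Fin m)) :=
    ((Matrix.toEuclideanLin (𝕜 := ℝ) (m := Fin m) (n := Fin m)).trans
      LinearMap.toContinuousLinearMap).toLinearMap with hL
  have hLcont : Continuous L := LinearMap.continuous_of_finiteDimensional L
  have hLapp : ∀ (A : Matrix (Fin m) (Fin m) ℝ) (v : EuclideanSpace ℝ (Fin m)),
      L A v = mv A v := by
    intro A v
    simp [hL, mv]
  obtain ⟨z, hzK, hz⟩ := hK.exists_isMaxOn hKne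
    (((hLcont.comp_continuousOn hSc)).norm)
  set M := ‖L (S z)‖ with hMdef
  have hM0 : 0 ≤ M := norm_nonneg _
  have hMb : ∀ x ∈ K, ∀ v : EuclideanSpace ℝ (Fin m), ‖mv (S x) v‖ ≤ M * ‖v‖ := by
    intro x hx v
    calc ‖mv (S x) v‖ = ‖L (S x) v‖ := by rw [hLapp]
    _ ≤ ‖L (S x)‖ * ‖v‖ := (L (S x)).le_opNorm v
    _ ≤ M * ‖v‖ := mul_le_mul_of_nonneg_right (hz hx) (norm_nonneg v)
  -- lower bound on ‖p‖
  obtain ⟨x₀, hx₀K, hρ⟩ := hK.exists_isMinOn hKne hpc.norm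
  set ρ := ‖p x₀‖ with hρdef
  have hρ0 : 0 < ρ := norm_pos_iff.mpr (hp0 x₀ hx₀K)
  -- uniform convergence
  rw [Metric.tendstoUniformlyOn_iff]
  intro εp hεp
  set C := Real.sqrt (204*M^3 + 580*M^4) + 18*M^2 with hC
  have hC0 : 0 ≤ C := by positivity
  set T := max ((4*M+1)/ρ) (((C/(ρ*εp))^2 + 1)/ρ) with hT
  filter_upwards [hdtop.eventually (Filter.eventually_ge_atTop T)] with n hn x hx
  have hpx : ρ ≤ ‖p x‖ := hρ hx
  have hpx0 : 0 < ‖p x‖ := lt_of_lt_of_le hρ0 hpx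
  have hd := hdpos n
  have hD4 : 4*M+1 ≤ dseq n * ‖p x‖ := by
    have h1 : (4*M+1)/ρ ≤ dseq n := le_trans (le_max_left _ _) hn
    have h2 : 4*M+1 ≤ dseq n * ρ := (div_le_iff₀ hρ0).1 h1
    have h3 : dseq n * ρ ≤ dseq n * ‖p x‖ := mul_le_mul_of_nonneg_left hpx hd.le
    linarith
  have hkey := key_bound (hSsymm x hx) (hp0 x hx) (hMb x hx) (hdpos n) hD4
    (haunit n x hx) (hamin n x hx)
  rw [← hC] at hkey
  have hsqrt : C/(ρ*εp) < Real.sqrt (dseq n * ‖p x‖) := by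
    have hT2 : ((C/(ρ*εp))^2 + 1)/ρ ≤ dseq n := le_trans (le_max_right _ _) hn
    have h2 : (C/(ρ*εp))^2 + 1 ≤ dseq n * ρ := (div_le_iff₀ hρ0).1 hT2
    have h3 : dseq n * ρ ≤ dseq n * ‖p x‖ := mul_le_mul_of_nonneg_left hpx hd.le
    have h1 : (C/(ρ*εp))^2 < dseq n * ‖p x‖ := by linarith
    calc C/(ρ*εp) = Real.sqrt ((C/(ρ*εp))^2) := (Real.sqrt_sq (by positivity)).symm
    _ < Real.sqrt (dseq n * ‖p x‖) := Real.sqrt_lt_sqrt (by positivity) h1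
  have hsD' : 0 < Real.sqrt (dseq n * ‖p x‖) := Real.sqrt_pos.mpr (by positivity)
  have h2 : C / Real.sqrt (dseq n * ‖p x‖) < ρ*εp := by
    rw [div_lt_iff₀ hsD']
    have := (div_lt_iff₀ (by positivity : (0:ℝ) < ρ*εp)).1 hsqrt
    linarith
  have h3 : ‖p x‖ * ‖dseq n • (aseq n x - ‖p x‖⁻¹ • p x) - (2:ℝ) • qq (p x) (S x)‖
      < ‖p x‖ * εp := by
    have ha1 : ‖p x‖ * ‖dseq n • (aseq n x - ‖p x‖⁻¹ • p x) - (2:ℝ) • qq (p x) (S x)‖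
        < ρ*εp := lt_of_le_of_lt hkey h2
    have ha2 : ρ*εp ≤ ‖p x‖*εp := mul_le_mul_of_nonneg_right hpx hεp.le
    linarith
  have h4 := lt_of_mul_lt_mul_left h3 (norm_nonneg (p x))
  rw [dist_comm, dist_eq_norm]
  exact h4


end
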